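/- Let A, B, C be nonempty finite sets in a metric space (M,d), and define f(X,Y) = Σ_{x∈X} Σ_{y∈Y} d(x,y). Then f(A,B) ≤ (|B|/|C|)·f(A,C) + (|A|/|C|)·f(B,C). -/

import Mathlib

theorem stmt_2 {M : Type*} [MetricSpace M] (A B C : Finset M)
    (hA : A.Nonempty) (hB : B.Nonempty) (hC : C.Nonempty) :
    ∑ a ∈ A, ∑ b ∈ B, dist a b ≤
      ((B.card : ℝ) / C.card) * ∑ a ∈ A, ∑ c ∈ C, dist a c +
        ((A.card : ℝ) / C.card) * ∑ b ∈ B, ∑ c ∈ C, dist b c := by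
  have hc : (0:ℝ) < C.card := by exact_mod_cast hC.card_pos
  rw [div_mul_eq_mul_div, div_mul_eq_mul_div, ← add_div, le_div_iff₀ hc]
  calc (∑ a ∈ A, ∑ b ∈ B, dist a b) * C.card
      = ∑ a ∈ A, ∑ b ∈ B, ∑ _c ∈ C, dist a b := by
        simp [Finset.sum_mul, Finset.sum_const, mul_comm, Finset.mul_sum]
    _ ≤ ∑ a ∈ A, ∑ b ∈ B, ∑ c ∈ C, (dist a c + dist b c) := by
        gcongr with a ha b hb c hcm
        exact dist_triangle_right a b c
    _ = (B.card : ℝ) * ∑ a ∈ A, ∑ c ∈ C, dist a c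
        + (A.card : ℝ) * ∑ b ∈ B, ∑ c ∈ C, dist b c := by
        simp only [Finset.sum_add_distrib, Finset.mul_sum]
        congr 1
        · rw [Finset.sum_comm (s := A)]
          rw [Finset.sum_comm]
          simp [Finset.sum_mul, Finset.mul_sum]
        · simp [Finset.sum_const, Finset.mul_sum]
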